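/- Let ξ be a real-valued random variable and C₂ > 0, m > 0, r ∈ ℝ constants. If max(P(ξ > x), P(ξ < −x)) ≤ exp(−C₂ · x^m · (ln x)^{−m·r}) for all x > e, then there exists C₁ = C₁(C₂, m, r) < ∞ such that (E|ξ|^p)^{1/p} ≤ C₁ · p^{1/m} · (ln p)^r for all p ≥ 2. -/

import Mathlib

set_option maxHeartbeats 1000000

open MeasureTheory Real Set

noncomputable def mom {Ω : Type*} [MeasurableSpace Ω] (μ : Measure Ω) (ζ : Ω → ℝ) (p : ℝ) : ℝ :=
  (∫ ω, |ζ ω| ^ p ∂μ) ^ (1 / p)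

noncomputable def tail {Ω : Type*} [MeasurableSpace Ω] (μ : Measure Ω) (ζ : Ω → ℝ) (y : ℝ) : ℝ :=
  max (μ {ω | ζ ω > y}).toReal (μ {ω | ζ ω < -y}).toReal

lemma aux_log_rpow {x ε : ℝ} (hx : 0 < x) (hε : 0 < ε) : log x ≤ x ^ ε / ε := by
  have h1 : log (x ^ ε) ≤ x ^ ε - 1 := Real.log_le_sub_one_of_pos (by positivity)
  have h2 : log (x ^ ε) = ε * log x := Real.log_rpow hx ε
  rw [le_div_iff₀ hε]; nlinarith

lemma L1 (m r : ℝ) (hm : 0 < m) :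
    ∃ c > 0, ∀ p : ℝ, 2 ≤ p → c * p ^ (1/(2*m)) ≤ p ^ (1/m) * log p ^ r := by
  rcases le_or_gt 0 r with hr | hr
  · refine ⟨log 2 ^ r, Real.rpow_pos_of_pos (Real.log_pos one_lt_two) r, fun p hp => ?_⟩
    have hp1 : (1:ℝ) ≤ p := by linarith
    have h1 : p ^ (1/(2*m)) ≤ p ^ (1/m) :=
      Real.rpow_le_rpow_of_exponent_le hp1 (by rw [div_le_div_iff₀ (by positivity) hm]; linarith)
    have h2 : log 2 ^ r ≤ log p ^ r :=
      Real.rpow_le_rpow (Real.log_nonneg one_le_two) (Real.log_le_log two_pos hp) hr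
    calc log 2 ^ r * p ^ (1/(2*m)) ≤ log p ^ r * p ^ (1/m) := by
          apply mul_le_mul h2 h1 (by positivity)
            (Real.rpow_nonneg (Real.log_nonneg (by linarith)) r)
      _ = p ^ (1/m) * log p ^ r := by ring
  · set ε : ℝ := 1/(2*m*(-r)) with hεdef
    have hε : 0 < ε := by
      have hrr : (0:ℝ) < -r := neg_pos.mpr hr
      rw [hεdef]; positivity
    refine ⟨ε⁻¹ ^ r, Real.rpow_pos_of_pos (by positivity) r, fun p hp => ?_⟩
    have hp0 : (0:ℝ) < p := by linarith
    have hlp : 0 < log p := Real.log_pos (by linarith)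
    have h1 : log p ≤ ε⁻¹ * p ^ ε := by
      have := aux_log_rpow hp0 hε
      rw [div_eq_inv_mul] at this; exact this
    have h2 : (ε⁻¹ * p ^ ε) ^ r ≤ log p ^ r :=
      Real.rpow_le_rpow_of_nonpos hlp h1 hr.le |>.trans_eq rfl
    have h3 : (ε⁻¹ * p ^ ε) ^ r = ε⁻¹ ^ r * p ^ (ε * r) := by
      rw [Real.mul_rpow (by positivity) (by positivity), ← Real.rpow_mul hp0.le]
    have h4 : ε * r = -(1/(2*m)) := by
      have hm0 : m ≠ 0 := hm.ne'
      have hr0 : r ≠ 0 := hr.ne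
      rw [hεdef]; field_simp
    have h5 : p ^ (1/m) * p ^ (ε * r) = p ^ (1/(2*m)) := by
      rw [← Real.rpow_add hp0, h4]
      congr 1; field_simp; ring
    calc ε⁻¹ ^ r * p ^ (1/(2*m)) = p ^ (1/m) * (ε⁻¹ ^ r * p ^ (ε * r)) := by
          rw [← h5]; ring
      _ ≤ p ^ (1/m) * log p ^ r := by
          apply mul_le_mul_of_nonneg_left _ (by positivity)
          rw [← h3]; exact h2

lemma L2 (m r : ℝ) (hm : 0 < m) :
    ∃ C > 0, ∀ p : ℝ, 2 ≤ p → p ^ (1/m) * log p ^ r ≤ C * p ^ (2/m) := by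
  rcases le_or_gt r 0 with hr | hr
  · refine ⟨log 2 ^ r, Real.rpow_pos_of_pos (Real.log_pos one_lt_two) r, fun p hp => ?_⟩
    have hp1 : (1:ℝ) ≤ p := by linarith
    have h1 : p ^ (1/m) ≤ p ^ (2/m) :=
      Real.rpow_le_rpow_of_exponent_le hp1 (by rw [div_le_div_iff₀ hm hm]; linarith)
    have h2 : log p ^ r ≤ log 2 ^ r :=
      Real.rpow_le_rpow_of_nonpos (Real.log_pos one_lt_two)
        (Real.log_le_log two_pos hp) hr
    calc p ^ (1/m) * log p ^ r ≤ p ^ (2/m) * log 2 ^ r := by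
          apply mul_le_mul h1 h2
            (Real.rpow_nonneg (Real.log_nonneg (by linarith)) r) (by positivity)
      _ = log 2 ^ r * p ^ (2/m) := by ring
  · set ε : ℝ := 1/(m*r) with hεdef
    have hε : 0 < ε := by positivity
    refine ⟨ε⁻¹ ^ r, Real.rpow_pos_of_pos (by positivity) r, fun p hp => ?_⟩
    have hp0 : (0:ℝ) < p := by linarith
    have hlp : 0 < log p := Real.log_pos (by linarith)
    have h1 : log p ≤ ε⁻¹ * p ^ ε := by
      have := aux_log_rpow hp0 hε
      rw [div_eq_inv_mul] at this; exact this
    have h2 : log p ^ r ≤ (ε⁻¹ * p ^ ε) ^ r := Real.rpow_le_rpow hlp.le h1 hr.le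
    have h3 : (ε⁻¹ * p ^ ε) ^ r = ε⁻¹ ^ r * p ^ (ε * r) := by
      rw [Real.mul_rpow (by positivity) (by positivity), ← Real.rpow_mul hp0.le]
    have h4 : ε * r = 1/m := by
      have hm0 : m ≠ 0 := hm.ne'
      have hr0 : r ≠ 0 := hr.ne'
      rw [hεdef]; field_simp
    have h5 : p ^ (1/m) * p ^ (ε * r) = p ^ (2/m) := by
      rw [← Real.rpow_add hp0, h4]; congr 1; ring
    calc p ^ (1/m) * log p ^ r ≤ p ^ (1/m) * (ε⁻¹ ^ r * p ^ (ε * r)) := by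
          apply mul_le_mul_of_nonneg_left _ (by positivity)
          rw [← h3]; exact h2
      _ = ε⁻¹ ^ r * p ^ (2/m) := by rw [← h5]; ring

lemma poly_le_exp (q m : ℝ) (hq : 0 < q) (hm : 0 < m) :
    ∃ M > 0, ∀ u : ℝ, 0 ≤ u → (1+u) ^ q ≤ M * exp (m*u) := by
  refine ⟨exp (m + q * log (q/m)), exp_pos _, fun u hu => ?_⟩
  have h0 : (0:ℝ) < 1 + u := by linarith
  have h1 : (1+u) ^ q = exp (q * log (1+u)) := by
    rw [Real.rpow_def_of_pos h0]; ring_nf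
  have hε : (0:ℝ) < m/q := by positivity
  have h2 : log (1+u) ≤ (m/q) * (1+u) + log (m/q)⁻¹ := by
    have h1' : log ((m/q) * (1+u)) ≤ (m/q) * (1+u) - 1 :=
      Real.log_le_sub_one_of_pos (by positivity)
    have h2' : log ((m/q) * (1+u)) = log (m/q) + log (1+u) := Real.log_mul hε.ne' h0.ne'
    have h3' : log (m/q)⁻¹ = - log (m/q) := Real.log_inv _
    linarith
  have h3 : q * log (1+u) ≤ m + m * u + q * log (q/m) := by
    have he : (m/q)⁻¹ = q/m := by field_simp
    have h4 := mul_le_mul_of_nonneg_left h2 hq.le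
    rw [he] at h4
    have h5 : q * ((m/q) * (1+u)) = m * (1+u) := by field_simp
    nlinarith [h4]
  rw [h1, ← Real.exp_add]
  exact Real.exp_le_exp.mpr (by linarith)

section
variable {C₂ m r c K : ℝ}

-- facts about A = K p^{1/m} (log p)^r, given K*c ≥ 3, K ≥ 1
lemma Afacts (hm : 0 < m) (hc : 0 < c)
    (hc' : ∀ p : ℝ, 2 ≤ p → c * p ^ (1/(2*m)) ≤ p ^ (1/m) * log p ^ r)
    (hK1 : 1 ≤ K) (hK3 : 3 ≤ K * c) {p : ℝ} (hp : 2 ≤ p) :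
    3 ≤ K * p ^ (1/m) * log p ^ r ∧
    1 ≤ log (K * p ^ (1/m) * log p ^ r) ∧
    (1/(2*m)) * log p ≤ log (K * p ^ (1/m) * log p ^ r) ∧
    (K * p ^ (1/m) * log p ^ r) ^ m = K ^ m * p * log p ^ (r*m) := by
  have hp0 : (0:ℝ) < p := by linarith
  have hp1 : (1:ℝ) ≤ p := by linarith
  have hlp : 0 < log p := Real.log_pos (by linarith)
  have hcp := hc' p hp
  have hK0 : 0 < K := by linarith
  have hAge : K * (c * p ^ (1/(2*m))) ≤ K * p ^ (1/m) * log p ^ r := by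
    rw [mul_assoc]
    exact mul_le_mul_of_nonneg_left hcp hK0.le
  have h1p : (1:ℝ) ≤ p ^ (1/(2*m)) := Real.one_le_rpow hp1 (by positivity)
  have hA3 : 3 ≤ K * p ^ (1/m) * log p ^ r := by nlinarith
  have hA0 : 0 < K * p ^ (1/m) * log p ^ r := by linarith
  have hlog3 : (1:ℝ) ≤ log 3 := by
    rw [show (1:ℝ) = log (exp 1) from (Real.log_exp 1).symm]
    exact Real.log_le_log (exp_pos 1) (by have := Real.exp_one_lt_d9; linarith)
  have h13 : log 3 ≤ log K + log c := by
    have := Real.log_le_log (by norm_num) hK3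
    rwa [Real.log_mul hK0.ne' hc.ne'] at this
  have hlogA : log K + log c + (1/(2*m)) * log p ≤ log (K * p ^ (1/m) * log p ^ r) := by
    have h1 := Real.log_le_log (by positivity) hAge
    rw [Real.log_mul hK0.ne' (by positivity), Real.log_mul hc.ne' (by positivity),
      Real.log_rpow hp0] at h1
    linarith
  have hpos : 0 ≤ (1/(2*m)) * log p := by positivity
  refine ⟨hA3, by linarith, by linarith, ?_⟩
  rw [Real.mul_rpow (by positivity) (Real.rpow_nonneg hlp.le r),
    Real.mul_rpow (by positivity) (by positivity),
    ← Real.rpow_mul hp0.le, one_div, inv_mul_cancel₀ hm.ne', Real.rpow_one,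
    ← Real.rpow_mul hlp.le]

lemma case_neg (hC₂ : 0 < C₂) (hm : 0 < m) (hr : r ≤ 0) (hc : 0 < c)
    (hc' : ∀ p : ℝ, 2 ≤ p → c * p ^ (1/(2*m)) ≤ p ^ (1/m) * log p ^ r)
    (hK1 : 1 ≤ K) (hK3 : 3 ≤ K * c)
    (hKκ : 2 ≤ C₂ * K ^ m * (1/(2*m)) ^ (-(m*r)) * min 1 m)
    {p : ℝ} (hp : 2 ≤ p) :
    ∀ x : ℝ, K * p ^ (1/m) * log p ^ r ≤ x →
      2*p*(log x - log (K * p ^ (1/m) * log p ^ r) + 1) ≤ C₂ * x ^ m * log x ^ (-(m*r)) := by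
  obtain ⟨hA3, hlogA1, hlogA2, hAm⟩ := Afacts hm hc hc' hK1 hK3 hp
  set A := K * p ^ (1/m) * log p ^ r with hA
  have hA0 : 0 < A := by linarith
  have hp0 : (0:ℝ) < p := by linarith
  have hlp : 0 < log p := Real.log_pos (by linarith)
  have hs0 : 0 ≤ -(m*r) := by nlinarith
  have hγ0 : 0 < (1/(2*m)) ^ (-(m*r)) := Real.rpow_pos_of_pos (by positivity) _
  intro x hx
  set u := log x - log A with hu
  have hxA : 0 < x := by linarith
  have hu0 : 0 ≤ u := by
    have := Real.log_le_log hA0 hx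
    rw [hu]; linarith
  have hxe : x = A * exp u := by
    rw [hu, Real.exp_sub, Real.exp_log hxA, Real.exp_log hA0]; field_simp
  have hxm : x ^ m = A ^ m * exp (m*u) := by
    rw [hxe, Real.mul_rpow hA0.le (exp_pos u).le, ← Real.exp_mul, mul_comm u m]
  have hlogx : log x = log A + u := by rw [hu]; ring
  have hlxs : ((1/(2*m)) * log p) ^ (-(m*r)) ≤ log x ^ (-(m*r)) := by
    apply Real.rpow_le_rpow (by positivity) _ hs0
    rw [hlogx]; linarith
  have hsplit : ((1/(2*m)) * log p) ^ (-(m*r)) = (1/(2*m)) ^ (-(m*r)) * log p ^ (-(m*r)) := by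
    rw [Real.mul_rpow (by positivity) hlp.le]
  have hlpcancel : log p ^ (r*m) * log p ^ (-(m*r)) = 1 := by
    rw [← Real.rpow_add hlp]
    norm_num [show r*m + -(m*r) = 0 by ring]
  have hexp : 1 + m*u ≤ exp (m*u) := by
    have := Real.add_one_le_exp (m*u); linarith
  have hmin : min 1 m * (1+u) ≤ 1 + m*u := by
    rcases le_total 1 m with h | h
    · rw [min_eq_left h]; nlinarith
    · rw [min_eq_right h]; nlinarith
  have hmin0 : 0 < min 1 m := lt_min one_pos hm
  have hKm0 : (0:ℝ) < K ^ m := Real.rpow_pos_of_pos (by linarith) m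
  have hmain : 2 * (1+u) ≤ C₂ * K ^ m * (1/(2*m)) ^ (-(m*r)) * exp (m*u) := by
    have h1 : min 1 m * (1+u) ≤ exp (m*u) := le_trans hmin hexp
    have h2 : 0 < C₂ * K ^ m * (1/(2*m)) ^ (-(m*r)) := by positivity
    have h3 : 2 / min 1 m ≤ C₂ * K ^ m * (1/(2*m)) ^ (-(m*r)) := by
      rw [div_le_iff₀ hmin0]; linarith
    have h4 : (0:ℝ) ≤ min 1 m * (1+u) := mul_nonneg hmin0.le (by linarith)
    calc 2 * (1+u) = (2 / min 1 m) * (min 1 m * (1+u)) := by field_simp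
      _ ≤ (C₂ * K ^ m * (1/(2*m)) ^ (-(m*r))) * (min 1 m * (1+u)) :=
          mul_le_mul_of_nonneg_right h3 h4
      _ ≤ _ := mul_le_mul_of_nonneg_left h1 h2.le
  have hfinal : C₂ * K ^ m * (1/(2*m)) ^ (-(m*r)) * exp (m*u) * p
      ≤ C₂ * x ^ m * log x ^ (-(m*r)) := by
    have h1 : C₂ * x ^ m * (((1/(2*m)) * log p) ^ (-(m*r))) ≤ C₂ * x ^ m * log x ^ (-(m*r)) :=
      mul_le_mul_of_nonneg_left hlxs (by positivity)
    have h2 : C₂ * x ^ m * (((1/(2*m)) * log p) ^ (-(m*r)))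
        = C₂ * K ^ m * (1/(2*m)) ^ (-(m*r)) * exp (m*u) * p := by
      rw [hsplit, hxm, hAm]
      linear_combination (C₂ * K ^ m * (1/(2*m)) ^ (-(m*r)) * exp (m*u) * p) * hlpcancel
    linarith
  have hstep := mul_le_mul_of_nonneg_right hmain hp0.le
  calc 2*p*(log x - log A + 1) = 2 * (1+u) * p := by rw [hu]; ring
    _ ≤ C₂ * K ^ m * (1/(2*m)) ^ (-(m*r)) * exp (m*u) * p := hstep
    _ ≤ C₂ * x ^ m * log x ^ (-(m*r)) := hfinal

lemma case_pos (hC₂ : 0 < C₂) (hm : 0 < m) (hr : 0 < r) (hc : 0 < c)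
    (hc' : ∀ p : ℝ, 2 ≤ p → c * p ^ (1/(2*m)) ≤ p ^ (1/m) * log p ^ r)
    (hC : 0 < C)
    (hC' : ∀ p : ℝ, 2 ≤ p → p ^ (1/m) * log p ^ r ≤ C * p ^ (2/m))
    (hK1 : 1 ≤ K) (hK3 : 3 ≤ K * c)
    {M : ℝ} (hM0 : 0 < M) (hM : ∀ u : ℝ, 0 ≤ u → (1+u) ^ (1+m*r) ≤ M * exp (m*u))
    {D : ℝ} (hD1 : 1 ≤ D) (hD2 : 2/m ≤ D)
    (hDK : log K + log C ≤ (D - 2/m) * log 2)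
    (hKM : 2*M ≤ C₂ * K ^ m * D ^ (-(m*r)))
    {p : ℝ} (hp : 2 ≤ p) :
    ∀ x : ℝ, K * p ^ (1/m) * log p ^ r ≤ x →
      2*p*(log x - log (K * p ^ (1/m) * log p ^ r) + 1) ≤ C₂ * x ^ m * log x ^ (-(m*r)) := by
  obtain ⟨hA3, hlogA1, hlogA2, hAm⟩ := Afacts hm hc hc' hK1 hK3 hp
  set A := K * p ^ (1/m) * log p ^ r with hA
  have hA0 : 0 < A := by linarith
  have hp0 : (0:ℝ) < p := by linarith
  have hlp : 0 < log p := Real.log_pos (by linarith)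
  have hK0 : 0 < K := by linarith
  have hs0 : -(m*r) ≤ 0 := by nlinarith
  -- upper bound on log A
  have hlogAD : log A ≤ D * log p := by
    have h1 : A ≤ K * (C * p ^ (2/m)) :=
      mul_le_mul_of_nonneg_left (hC' p hp) hK0.le |>.trans_eq' (by rw [hA]; ring)
    have h2 : log A ≤ log K + log C + (2/m) * log p := by
      have := Real.log_le_log hA0 h1
      rwa [Real.log_mul hK0.ne' (by positivity), Real.log_mul hC.ne' (by positivity),
        Real.log_rpow hp0, ← add_assoc] at this
    have h3 : log 2 ≤ log p := Real.log_le_log two_pos hp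
    have h4 : (D - 2/m) * log 2 ≤ (D - 2/m) * log p :=
      mul_le_mul_of_nonneg_left h3 (by linarith)
    nlinarith
  intro x hx
  set u := log x - log A with hu
  have hxA : 0 < x := by linarith
  have hu0 : 0 ≤ u := by
    have := Real.log_le_log hA0 hx
    rw [hu]; linarith
  have hxe : x = A * exp u := by
    rw [hu, Real.exp_sub, Real.exp_log hxA, Real.exp_log hA0]; field_simp
  have hxm : x ^ m = A ^ m * exp (m*u) := by
    rw [hxe, Real.mul_rpow hA0.le (exp_pos u).le, ← Real.exp_mul, mul_comm u m]
  have hlogx : log x = log A + u := by rw [hu]; ring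
  have hlx0 : 0 < log x := by rw [hlogx]; linarith
  have hDlp0 : 0 < D * log p := by positivity
  have h1u : (0:ℝ) < 1 + u := by linarith
  -- lower bound for log x ^ s, s = -(m*r) < 0
  have hup : log x ≤ (D * log p) * (1+u) := by
    have : log A + u ≤ log A * (1+u) := by nlinarith
    have h2 : log A * (1+u) ≤ (D * log p) * (1+u) := by nlinarith
    rw [hlogx]; linarith
  have hlxs : ((D * log p) * (1+u)) ^ (-(m*r)) ≤ log x ^ (-(m*r)) :=
    Real.rpow_le_rpow_of_nonpos hlx0 hup hs0
  have hsplit : ((D * log p) * (1+u)) ^ (-(m*r))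
      = D ^ (-(m*r)) * log p ^ (-(m*r)) * (1+u) ^ (-(m*r)) := by
    rw [Real.mul_rpow (by positivity) h1u.le, Real.mul_rpow (by linarith) hlp.le]
  have hlpcancel : log p ^ (r*m) * log p ^ (-(m*r)) = 1 := by
    rw [← Real.rpow_add hlp]
    norm_num [show r*m + -(m*r) = 0 by ring]
  -- (1+u) = (1+u)^(1+m*r) * (1+u)^(-(m*r))
  have hdecomp : (1+u) = (1+u) ^ (1+m*r) * (1+u) ^ (-(m*r)) := by
    rw [← Real.rpow_add h1u, show (1+m*r) + -(m*r) = 1 by ring, Real.rpow_one]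
  have hus : 0 < (1+u) ^ (-(m*r)) := Real.rpow_pos_of_pos h1u _
  have hDs : 0 < D ^ (-(m*r)) := Real.rpow_pos_of_pos (by linarith) _
  have hKm0 : (0:ℝ) < K ^ m := Real.rpow_pos_of_pos hK0 m
  -- main pointwise bound
  have hmain : 2 * (1+u) ≤ C₂ * K ^ m * D ^ (-(m*r)) * exp (m*u) * (1+u) ^ (-(m*r)) := by
    have h1 : (1+u) ^ (1+m*r) ≤ M * exp (m*u) := hM u hu0
    have h2 : 2 * ((1+u) ^ (1+m*r)) ≤ (C₂ * K ^ m * D ^ (-(m*r))) * exp (m*u) := by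
      have h3 : 2 * ((1+u) ^ (1+m*r)) ≤ 2 * (M * exp (m*u)) := by linarith
      have h4 : 2 * M * exp (m*u) ≤ C₂ * K ^ m * D ^ (-(m*r)) * exp (m*u) :=
        mul_le_mul_of_nonneg_right hKM (exp_pos _).le
      linarith
    calc 2 * (1+u) = 2 * ((1+u) ^ (1+m*r)) * (1+u) ^ (-(m*r)) := by
          rw [mul_assoc, ← hdecomp]
      _ ≤ (C₂ * K ^ m * D ^ (-(m*r))) * exp (m*u) * (1+u) ^ (-(m*r)) :=
          mul_le_mul_of_nonneg_right h2 hus.le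
  have hfinal : C₂ * K ^ m * D ^ (-(m*r)) * exp (m*u) * (1+u) ^ (-(m*r)) * p
      ≤ C₂ * x ^ m * log x ^ (-(m*r)) := by
    have h1 : C₂ * x ^ m * (((D * log p) * (1+u)) ^ (-(m*r))) ≤ C₂ * x ^ m * log x ^ (-(m*r)) :=
      mul_le_mul_of_nonneg_left hlxs (by positivity)
    have h2 : C₂ * x ^ m * (((D * log p) * (1+u)) ^ (-(m*r)))
        = C₂ * K ^ m * D ^ (-(m*r)) * exp (m*u) * (1+u) ^ (-(m*r)) * p := by
      rw [hsplit, hxm, hAm]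
      linear_combination (C₂ * K ^ m * D ^ (-(m*r)) * (1+u) ^ (-(m*r)) * exp (m*u) * p) * hlpcancel
    linarith
  have hstep := mul_le_mul_of_nonneg_right hmain hp0.le
  calc 2*p*(log x - log A + 1) = 2 * (1+u) * p := by rw [hu]; ring
    _ ≤ C₂ * K ^ m * D ^ (-(m*r)) * exp (m*u) * (1+u) ^ (-(m*r)) * p := hstep
    _ ≤ C₂ * x ^ m * log x ^ (-(m*r)) := hfinal
end

lemma rpow_root_le {K T e : ℝ} (hT : 0 < T) (he : 0 < e) (hK : T ^ e⁻¹ ≤ K) (hK1 : 1 ≤ K) :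
    T ≤ K ^ e := by
  calc T = (T ^ e⁻¹) ^ e := by
        rw [← Real.rpow_mul hT.le, inv_mul_cancel₀ he.ne', Real.rpow_one]
    _ ≤ K ^ e := Real.rpow_le_rpow (by positivity) hK he.le

lemma key (C₂ m r : ℝ) (hC₂ : 0 < C₂) (hm : 0 < m) :
    ∃ K : ℝ, 1 ≤ K ∧ ∀ p : ℝ, 2 ≤ p →
      (3 ≤ K * p ^ (1/m) * log p ^ r ∧ 1 ≤ log (K * p ^ (1/m) * log p ^ r)) ∧
      ∀ x : ℝ, K * p ^ (1/m) * log p ^ r ≤ x →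
        2*p*(log x - log (K * p ^ (1/m) * log p ^ r) + 1) ≤ C₂ * x ^ m * log x ^ (-(m*r)) := by
  obtain ⟨c, hc, hc'⟩ := L1 m r hm
  rcases le_or_gt r 0 with hr | hr
  · set γ : ℝ := (1/(2*m)) ^ (-(m*r)) with hγdef
    have hγ0 : 0 < γ := Real.rpow_pos_of_pos (by positivity) _
    have hmin0 : 0 < min 1 m := lt_min one_pos hm
    set κ : ℝ := 2/(C₂ * γ * min 1 m) with hκdef
    have hκ0 : 0 < κ := by positivity
    refine ⟨max (max 1 (3/c)) (κ ^ m⁻¹), le_max_of_le_left (le_max_left _ _), fun p hp => ?_⟩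
    set K := max (max 1 (3/c)) (κ ^ m⁻¹) with hKdef
    have hK1 : 1 ≤ K := le_max_of_le_left (le_max_left _ _)
    have hK3 : 3 ≤ K * c := by
      have h : 3/c ≤ K := le_max_of_le_left (le_max_right _ _)
      calc (3:ℝ) = (3/c) * c := by field_simp
        _ ≤ K * c := mul_le_mul_of_nonneg_right h hc.le
    have hKκ : 2 ≤ C₂ * K ^ m * γ * min 1 m := by
      have h1 : κ ≤ K ^ m := rpow_root_le hκ0 hm (le_max_right _ _) hK1
      have h2 : κ * (C₂ * γ * min 1 m) = 2 := by
        rw [hκdef]; field_simp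
      nlinarith [Real.rpow_pos_of_pos (show (0:ℝ) < K by linarith) m]
    refine ⟨⟨(Afacts hm hc hc' hK1 hK3 hp).1, (Afacts hm hc hc' hK1 hK3 hp).2.1⟩, ?_⟩
    exact case_neg hC₂ hm hr hc hc' hK1 hK3 hKκ hp
  · obtain ⟨C, hC, hC'⟩ := L2 m r hm
    obtain ⟨M, hM0, hM⟩ := poly_le_exp (1+m*r) m (by nlinarith) hm
    obtain ⟨α, hαdef⟩ : ∃ α : ℝ, α = 1/log 2 := ⟨_, rfl⟩
    have hl2 : 0 < log 2 := Real.log_pos one_lt_two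
    have hα : 0 < α := by rw [hαdef]; positivity
    obtain ⟨β, hβdef⟩ : ∃ β : ℝ, β = |log C|/log 2 + 2/m + 1 := ⟨_, rfl⟩
    have hβ : 1 ≤ β := by
      have h1 : 0 ≤ |log C|/log 2 := by positivity
      have h2 : 0 < 2/m := by positivity
      rw [hβdef]; linarith
    obtain ⟨ε, hεdef⟩ : ∃ ε : ℝ, ε = 1/(2*r) := ⟨_, rfl⟩
    have hε : 0 < ε := by rw [hεdef]; positivity
    obtain ⟨G, hGdef⟩ : ∃ G : ℝ, G = α/ε + β := ⟨_, rfl⟩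
    have hG0 : 0 < G := by
      have h1 : 0 < α/ε := by positivity
      rw [hGdef]; linarith
    have hmr : 0 < m*r := by positivity
    obtain ⟨T, hTdef⟩ : ∃ T : ℝ, T = 2*M*G^(m*r)/C₂ := ⟨_, rfl⟩
    have hT0 : 0 < T := by
      have h1 : 0 < G ^ (m*r) := Real.rpow_pos_of_pos hG0 _
      rw [hTdef]; positivity
    obtain ⟨K, hKdef⟩ : ∃ K : ℝ, K = max (max 1 (3/c)) ((max T 1) ^ (2/m)) := ⟨_, rfl⟩
    have hK1 : 1 ≤ K := hKdef ▸ le_max_of_le_left (le_max_left _ _)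
    have hK0 : (0:ℝ) < K := by linarith
    have hK3 : 3 ≤ K * c := by
      have h : 3/c ≤ K := hKdef ▸ le_max_of_le_left (le_max_right _ _)
      calc (3:ℝ) = (3/c) * c := by field_simp
        _ ≤ K * c := mul_le_mul_of_nonneg_right h hc.le
    -- K^{m/2} ≥ T
    have hKT : T ≤ K ^ (m/2) := by
      have h1 : (max T 1) ^ (2/m) ≤ K := hKdef ▸ le_max_right _ _
      have h2 : max T 1 ≤ K ^ (m/2) := by
        have := rpow_root_le (T := max T 1) (e := m/2) (lt_of_lt_of_le hT0 (le_max_left _ _))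
          (by positivity) ?_ hK1
        · exact this
        · rw [show (m/2)⁻¹ = 2/m by field_simp]; exact h1
      exact le_trans (le_max_left _ _) h2
    obtain ⟨D, hDdef⟩ : ∃ D : ℝ, D = α * log K + β := ⟨_, rfl⟩
    have hlK0 : 0 ≤ log K := Real.log_nonneg hK1
    have hD1 : 1 ≤ D := by nlinarith [mul_nonneg hα.le hlK0]
    have hD2 : 2/m ≤ D := by
      have : 0 ≤ α * log K := by positivity
      have h2 : |log C|/log 2 ≥ 0 := by positivity
      rw [hDdef, hβdef]; linarith
    have hDK : log K + log C ≤ (D - 2/m) * log 2 := by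
      have h1 : (D - 2/m) * log 2 = log K + |log C| + log 2 := by
        rw [hDdef, hβdef, hαdef]; field_simp; ring
      have h2 : log C ≤ |log C| := le_abs_self _
      rw [h1]; linarith
    have hKM : 2*M ≤ C₂ * K ^ m * D ^ (-(m*r)) := by
      -- D ≤ G * K^ε
      have hKε1 : 1 ≤ K ^ ε := Real.one_le_rpow hK1 hε.le
      have hDG : D ≤ G * K ^ ε := by
        have h1 : log K ≤ K ^ ε / ε := aux_log_rpow hK0 hε
        have h2 : α * log K ≤ α * (K ^ ε / ε) := mul_le_mul_of_nonneg_left h1 hα.le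
        have h2' : α * (K ^ ε / ε) = (α/ε) * K ^ ε := by ring
        have h3 : β ≤ β * K ^ ε := le_mul_of_one_le_right (by linarith) hKε1
        have h4 : (α/ε + β) * K ^ ε = (α/ε) * K ^ ε + β * K ^ ε := by ring
        rw [hDdef, hGdef, h4]; linarith
      have hDmr : D ^ (m*r) ≤ G ^ (m*r) * K ^ (m/2) := by
        have h1 : D ^ (m*r) ≤ (G * K ^ ε) ^ (m*r) :=
          Real.rpow_le_rpow (by linarith) hDG hmr.le
        have h2 : (G * K ^ ε) ^ (m*r) = G ^ (m*r) * K ^ (ε * (m*r)) := by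
          rw [Real.mul_rpow hG0.le (by positivity), ← Real.rpow_mul hK0.le]
        have h3 : ε * (m*r) = m/2 := by rw [hεdef]; field_simp
        rw [h2, h3] at h1; exact h1
      have hKsplit : K ^ m = K ^ (m/2) * K ^ (m/2) := by
        rw [← Real.rpow_add hK0]; norm_num
      have hDpos : 0 < D := by linarith
      have hGK : 0 < G ^ (m*r) := Real.rpow_pos_of_pos hG0 _
      have hKm2 : 0 < K ^ (m/2) := Real.rpow_pos_of_pos hK0 _
      have hDmr0 : 0 < D ^ (m*r) := Real.rpow_pos_of_pos hDpos _
      -- 2M ≤ C₂ K^m / D^{mr}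
      have h4 : 2*M*D^(m*r) ≤ C₂ * K ^ m := by
        have h5 : 2*M*D^(m*r) ≤ 2*M*(G^(m*r) * K^(m/2)) := by nlinarith
        have h6 : T * (K^(m/2) * C₂) ≤ K^(m/2) * (K^(m/2) * C₂) :=
          mul_le_mul_of_nonneg_right hKT (by positivity)
        have h7 : T * (K^(m/2) * C₂) = 2*M*(G^(m*r)*K^(m/2)) := by
          rw [hTdef]; field_simp
        rw [hKsplit]; nlinarith
      have h8 : D ^ (-(m*r)) = (D^(m*r))⁻¹ := by
        rw [← Real.rpow_neg_one, ← Real.rpow_mul hDpos.le]; ring_nf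
      rw [h8, ← sub_nonneg]
      have h9 : C₂ * K ^ m * (D ^ (m*r))⁻¹ - 2*M
          = (C₂ * K ^ m - 2*M*D^(m*r)) * (D^(m*r))⁻¹ := by
        field_simp
      rw [h9]
      exact mul_nonneg (sub_nonneg.mpr h4) (inv_nonneg.mpr hDmr0.le)
    exact ⟨K, hK1, fun p hp => ⟨⟨(Afacts hm hc hc' hK1 hK3 hp).1,
      (Afacts hm hc hc' hK1 hK3 hp).2.1⟩,
      case_pos hC₂ hm hr hc hc' hC hC' hK1 hK3 hM0 hM hD1 hD2 hDK hKM hp⟩⟩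

lemma moment_bound {Ω : Type} [MeasurableSpace Ω] (μ : Measure Ω) [IsProbabilityMeasure μ]
    (ξ : Ω → ℝ) (C₂ m r p A : ℝ) (hm : 0 < m) (hp : 2 ≤ p) (hA3 : 3 ≤ A)
    (htail : ∀ x : ℝ, Real.exp 1 < x →
      tail μ ξ x ≤ Real.exp (-(C₂ * x ^ m * Real.log x ^ (-(m * r)))))
    (hineq : ∀ x : ℝ, A ≤ x →
      2*p*(log x - log A + 1) ≤ C₂ * x ^ m * log x ^ (-(m*r))) :
    mom μ ξ p ≤ 2*A := by
  have hp0 : (0:ℝ) < p := by linarith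
  have hA0 : (0:ℝ) < A := by linarith
  have hA1 : (1:ℝ) ≤ A := by linarith
  have hApinv : (A ^ p) ^ (1/p) = A := by
    rw [← Real.rpow_mul hA0.le, mul_one_div, div_self hp0.ne', Real.rpow_one]
  have hAp0 : (0:ℝ) < A ^ p := Real.rpow_pos_of_pos hA0 p
  rw [mom]
  by_cases hint : Integrable (fun ω => |ξ ω| ^ p) μ
  swap
  · rw [integral_undef hint, Real.zero_rpow (by positivity)]
    linarith
  · have hnn : 0 ≤ᵐ[μ] fun ω => |ξ ω| ^ p :=
      Filter.Eventually.of_forall fun ω => by positivity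
    -- pointwise tail bound for t > A^p
    have hptwise : ∀ t : ℝ, t ∈ Ioi (A ^ p) →
        μ {ω | t < |ξ ω| ^ p} ≤ ENNReal.ofReal (2*exp (-(2*p))*A^(2*p) * t ^ (-2 : ℝ)) := by
      intro t ht
      rw [mem_Ioi] at ht
      have ht0 : 0 < t := lt_trans hAp0 ht
      have hxA : A ≤ t ^ (1/p) := by
        rw [← hApinv]
        exact Real.rpow_le_rpow hAp0.le ht.le (by positivity)
      have hx0 : (0:ℝ) < t ^ (1/p) := by positivity
      have hex : exp 1 < t ^ (1/p) := by
        have := Real.exp_one_lt_d9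
        linarith
      -- subset of the two tails
      have hsub : {ω | t < |ξ ω| ^ p} ⊆ {ω | ξ ω > t ^ (1/p)} ∪ {ω | ξ ω < -(t ^ (1/p))} := by
        intro ω hω
        simp only [mem_setOf_eq] at hω ⊢
        have h1 : t ^ (1/p) < (|ξ ω| ^ p) ^ (1/p) :=
          Real.rpow_lt_rpow ht0.le hω (by positivity)
        have h2 : (|ξ ω| ^ p) ^ (1/p) = |ξ ω| := by
          rw [← Real.rpow_mul (abs_nonneg _), mul_one_div, div_self hp0.ne', Real.rpow_one]
        rw [h2] at h1
        rcases lt_abs.mp h1 with h | h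
        · exact mem_union_left _ (show t ^ (1/p) < ξ ω from h)
        · exact mem_union_right _ (show ξ ω < -(t ^ (1/p)) by linarith)
      -- each tail bounded by the exponential
      set x := t ^ (1/p) with hxdef
      have hE := htail x hex
      have hEineq : C₂ * x ^ m * log x ^ (-(m*r)) ≥ 2*p*(log x - log A + 1) := hineq x hxA
      have hEbound : exp (-(C₂ * x ^ m * log x ^ (-(m*r))))
          ≤ exp (-(2*p)) * A ^ (2*p) * t ^ (-2 : ℝ) := by
        have h1 : exp (-(C₂ * x ^ m * log x ^ (-(m*r)))) ≤ exp (-(2*p*(log x - log A + 1))) :=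
          Real.exp_le_exp.mpr (by linarith)
        have h2 : exp (-(2*p*(log x - log A + 1)))
            = exp (log x * (-(2*p))) * exp (log A * (2*p)) * exp (-(2*p)) := by
          rw [← Real.exp_add, ← Real.exp_add]; ring_nf
        have h3 : exp (log x * (-(2*p))) = x ^ (-(2*p)) := (Real.rpow_def_of_pos hx0 _).symm
        have h4 : exp (log A * (2*p)) = A ^ (2*p) := (Real.rpow_def_of_pos hA0 _).symm
        have h5 : x ^ (-(2*p)) = t ^ (-2 : ℝ) := by
          rw [hxdef, ← Real.rpow_mul ht0.le]
          congr 1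
          field_simp
        rw [h2, h3, h4, h5] at h1
        calc exp (-(C₂ * x ^ m * log x ^ (-(m*r)))) ≤ t ^ (-2:ℝ) * A ^ (2*p) * exp (-(2*p)) := h1
          _ = exp (-(2*p)) * A ^ (2*p) * t ^ (-2:ℝ) := by ring
      have hμ1 : μ {ω | ξ ω > x} ≤ ENNReal.ofReal (exp (-(2*p)) * A ^ (2*p) * t ^ (-2:ℝ)) := by
        rw [← ENNReal.ofReal_toReal (measure_ne_top μ {ω | ξ ω > x})]
        exact ENNReal.ofReal_le_ofReal
          (le_trans (le_trans (le_max_left _ _) hE) hEbound)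
      have hμ2 : μ {ω | ξ ω < -x} ≤ ENNReal.ofReal (exp (-(2*p)) * A ^ (2*p) * t ^ (-2:ℝ)) := by
        rw [← ENNReal.ofReal_toReal (measure_ne_top μ {ω | ξ ω < -x})]
        exact ENNReal.ofReal_le_ofReal
          (le_trans (le_trans (le_max_right _ _) hE) hEbound)
      calc μ {ω | t < |ξ ω| ^ p} ≤ μ ({ω | ξ ω > x} ∪ {ω | ξ ω < -x}) := measure_mono hsub
        _ ≤ μ {ω | ξ ω > x} + μ {ω | ξ ω < -x} := measure_union_le _ _
        _ ≤ ENNReal.ofReal (exp (-(2*p)) * A ^ (2*p) * t ^ (-2:ℝ))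
            + ENNReal.ofReal (exp (-(2*p)) * A ^ (2*p) * t ^ (-2:ℝ)) := add_le_add hμ1 hμ2
        _ = ENNReal.ofReal (2*exp (-(2*p))*A^(2*p) * t ^ (-2 : ℝ)) := by
            rw [← ENNReal.ofReal_add (by positivity) (by positivity)]
            congr 1; ring
    -- lintegral bound
    have hL : ∫⁻ ω, ENNReal.ofReal (|ξ ω| ^ p) ∂μ ≤ ENNReal.ofReal (2 * A ^ p) := by
      rw [lintegral_eq_lintegral_meas_lt μ hnn hint.1.aemeasurable]
      have hsplit : Ioi (0:ℝ) = Ioc 0 (A^p) ∪ Ioi (A^p) := (Ioc_union_Ioi_eq_Ioi hAp0.le).symm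
      rw [hsplit, lintegral_union measurableSet_Ioi Ioc_disjoint_Ioi_same]
      have hpart1 : ∫⁻ t in Ioc (0:ℝ) (A^p), μ {ω | t < |ξ ω| ^ p} ≤ ENNReal.ofReal (A ^ p) := by
        calc ∫⁻ t in Ioc (0:ℝ) (A^p), μ {ω | t < |ξ ω| ^ p}
            ≤ ∫⁻ _ in Ioc (0:ℝ) (A^p), 1 := lintegral_mono fun t => prob_le_one
          _ = volume (Ioc (0:ℝ) (A^p)) := setLIntegral_one _
          _ = ENNReal.ofReal (A ^ p) := by rw [Real.volume_Ioc, sub_zero]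
      have hpart2 : ∫⁻ t in Ioi (A^p), μ {ω | t < |ξ ω| ^ p} ≤ ENNReal.ofReal (A ^ p) := by
        have hgint : IntegrableOn (fun t : ℝ => 2*exp (-(2*p))*A^(2*p) * t ^ (-2 : ℝ))
            (Ioi (A^p)) := by
          exact (integrableOn_Ioi_rpow_of_lt (by norm_num) hAp0).const_mul _
        have step1 : ∫⁻ t in Ioi (A^p), μ {ω | t < |ξ ω| ^ p}
            ≤ ∫⁻ t in Ioi (A^p), ENNReal.ofReal (2*exp (-(2*p))*A^(2*p) * t ^ (-2 : ℝ)) := by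
          exact lintegral_mono_ae (ae_restrict_of_forall_mem measurableSet_Ioi hptwise)
        have step2 : ∫⁻ t in Ioi (A^p), ENNReal.ofReal (2*exp (-(2*p))*A^(2*p) * t ^ (-2 : ℝ))
            = ENNReal.ofReal (∫ t in Ioi (A^p), 2*exp (-(2*p))*A^(2*p) * t ^ (-2 : ℝ)) := by
          rw [← ofReal_integral_eq_lintegral_ofReal hgint
            (ae_restrict_of_forall_mem measurableSet_Ioi (fun t ht => by
              have ht0 : (0:ℝ) < t := lt_trans hAp0 ht
              positivity))]
        have step3 : ∫ t in Ioi (A^p), 2*exp (-(2*p))*A^(2*p) * t ^ (-2 : ℝ)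
            = 2*exp (-(2*p))*A^p := by
          rw [MeasureTheory.integral_const_mul, integral_Ioi_rpow_of_lt (by norm_num) hAp0]
          have h1 : -(A^p) ^ ((-2:ℝ) + 1) / (-2 + 1) = (A^p) ^ (-1:ℝ) := by
            norm_num
          have h2 : A ^ (2*p) * (A^p) ^ (-1:ℝ) = A ^ p := by
            rw [← Real.rpow_mul hA0.le, ← Real.rpow_add hA0]
            congr 1; ring
          rw [h1, mul_assoc, h2]
        have step4 : (2*exp (-(2*p))*A^p) ≤ A ^ p := by
          have h1 : exp (-(2*p)) ≤ exp (-(4:ℝ)) := Real.exp_le_exp.mpr (by linarith)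
          have h2 : exp (-(4:ℝ)) ≤ 1/2 := by
            have h5 : (5:ℝ) ≤ exp 4 := by nlinarith [Real.add_one_le_exp (4:ℝ)]
            rw [Real.exp_neg, inv_eq_one_div, div_le_div_iff₀ (Real.exp_pos 4) two_pos]
            linarith
          nlinarith [Real.exp_pos (-(2*p)), hAp0]
        calc ∫⁻ t in Ioi (A^p), μ {ω | t < |ξ ω| ^ p}
            ≤ ∫⁻ t in Ioi (A^p), ENNReal.ofReal (2*exp (-(2*p))*A^(2*p) * t ^ (-2 : ℝ)) := step1
          _ = ENNReal.ofReal (∫ t in Ioi (A^p), 2*exp (-(2*p))*A^(2*p) * t ^ (-2 : ℝ)) := step2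
          _ = ENNReal.ofReal (2*exp (-(2*p))*A^p) := by rw [step3]
          _ ≤ ENNReal.ofReal (A ^ p) := ENNReal.ofReal_le_ofReal step4
      refine le_trans (add_le_add hpart1 hpart2) ?_
      rw [← ENNReal.ofReal_add (by positivity) (by positivity)]
      exact le_of_eq (by congr 1; ring)
    -- from lintegral to integral
    have hI : ∫ ω, |ξ ω| ^ p ∂μ ≤ 2 * A ^ p := by
      rw [integral_eq_lintegral_of_nonneg_ae hnn hint.1]
      calc (∫⁻ ω, ENNReal.ofReal (|ξ ω| ^ p) ∂μ).toReal
          ≤ (ENNReal.ofReal (2 * A ^ p)).toReal :=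
            ENNReal.toReal_mono ENNReal.ofReal_ne_top hL
        _ = 2 * A ^ p := ENNReal.toReal_ofReal (by positivity)
    -- final rpow juggling
    have hInn : 0 ≤ ∫ ω, |ξ ω| ^ p ∂μ := integral_nonneg fun ω => by positivity
    calc (∫ ω, |ξ ω| ^ p ∂μ) ^ (1/p) ≤ (2 * A ^ p) ^ (1/p) :=
          Real.rpow_le_rpow hInn hI (by positivity)
      _ = 2 ^ (1/p) * A := by
          rw [Real.mul_rpow (by norm_num) hAp0.le, hApinv]
      _ ≤ 2 * A := by
          have h1 : (2:ℝ) ^ (1/p) ≤ 2 ^ (1:ℝ) :=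
            Real.rpow_le_rpow_of_exponent_le one_le_two (by
              rw [div_le_one hp0]; linarith)
          rw [Real.rpow_one] at h1
          nlinarith

/-- the tail bound T_ξ(x) ≤ exp(−C₂ x^m (ln x)^{−mr}) for x > e implies the
moment growth |ξ|_p ≤ C₁ p^{1/m} (ln p)^r for all p ≥ 2, with C₁ = C₁(C₂, m, r) < ∞. -/
theorem stmt3 (C₂ m r : ℝ) (hC₂ : 0 < C₂) (hm : 0 < m) :
    ∃ C₁ : ℝ, 0 < C₁ ∧
      ∀ (Ω : Type) (_ : MeasurableSpace Ω) (μ : Measure Ω), IsProbabilityMeasure μ →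
      ∀ ξ : Ω → ℝ,
      (∀ x : ℝ, Real.exp 1 < x →
        tail μ ξ x ≤ Real.exp (-(C₂ * x ^ m * Real.log x ^ (-(m * r))))) →
      ∀ p : ℝ, 2 ≤ p → mom μ ξ p ≤ C₁ * p ^ (1/m) * Real.log p ^ r := by
  obtain ⟨K, hK1, hkey⟩ := key C₂ m r hC₂ hm
  refine ⟨2*K, by linarith, ?_⟩
  intro Ω _ μ hμ ξ htail p hp
  haveI := hμ
  obtain ⟨⟨hA3, -⟩, hineq⟩ := hkey p hp
  have h := moment_bound μ ξ C₂ m r p (K * p ^ (1/m) * log p ^ r) hm hp hA3 htail hineq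
  calc mom μ ξ p ≤ 2 * (K * p ^ (1/m) * log p ^ r) := h
    _ = 2*K * p ^ (1/m) * log p ^ r := by ring
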